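/- The no-common-neighbor hypothesis in the Holepunch Theorem cannot be dropped: let a, b, c, d, f, r, s be seven pairwise distinct colors, and let G be the plane graph with vertex set {p0, q0, z, q1, p1, u1}, outer cycle C = p0 q0 z q1 p1 u1 (edges p0q0, q0z, zq1, q1p1, p1u1, u1p0), and additional edges u1z, u1q0, u1q1. Let L be the list-assignment with L(p0) = {a}, L(u1) = {a, b, c}, L(p1) = {b, c, f}, L(q0) = {a, b, c, r, s}, L(q1) = {b, c, d, f, s}, L(z) = {b, c, d, r, s}, and let P = p0 q0 z q1 p1. Then there is no partial L-coloring φ of V(C)∖{q0, q1} with p0, p1, z ∈ dom(φ) such that |L_φ(q0)| ≥ 3, |L_φ(q1)| ≥ 3, and every extension of φ to an L-coloring of dom(φ) ∪ {q0, q1} extends to an L-coloring of G. -/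

import Mathlib

open scoped Classical

/-! ### Basic list-colouring notions (colours are natural numbers) -/

/-- `φ` is an `L`-coloring of the vertex set `S` in the graph `G`: it takes values in the
lists and is a proper coloring of the subgraph induced by `S`. -/
def IsColoringOn {V : Type} (G : SimpleGraph V) (L : V → Finset ℕ)
    (S : Finset V) (φ : V → ℕ) : Prop :=
  (∀ v ∈ S, φ v ∈ L v) ∧ ∀ ⦃u v : V⦄, u ∈ S → v ∈ S → G.Adj u v → φ u ≠ φ v

/-- The reduced list-assignment `L_φ` obtained from a partial coloring `φ` with domain `D`:
from `L v` delete the colors used by `φ` on neighbours of `v` lying in `D`. -/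
noncomputable def reducedList {V : Type} [DecidableEq V] (G : SimpleGraph V)
    (L : V → Finset ℕ) (D : Finset V) (φ : V → ℕ) (v : V) : Finset ℕ :=
  L v \ (D.filter (fun w => G.Adj v w)).image φ

/-- The (cyclically) consecutive pairs of a list regarded as a cycle. -/
def cycleEdges {V : Type} (f : List V) : List (V × V) := f.zip (f.rotate 1)

/-- `f` is (the list of vertices, in cyclic order, of) a cycle of `G`. -/
def IsCycleList {V : Type} (G : SimpleGraph V) (f : List V) : Prop :=
  f.Nodup ∧ 3 ≤ f.length ∧ ∀ p ∈ cycleEdges f, G.Adj p.1 p.2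

/-- `uv` is an edge of the cycle (given as a list) `f`. -/
def EdgeOnCycle {V : Type} (f : List V) (u v : V) : Prop :=
  (u, v) ∈ cycleEdges f ∨ (v, u) ∈ cycleEdges f

/-- The consecutive pairs of a list regarded as a path. -/
def consecPairs {V : Type} (l : List V) : List (V × V) := l.zip l.tail

/-- `a` and `b` are consecutive on the path (given as a list) `l`. -/
def AdjInList {V : Type} (l : List V) (a b : V) : Prop :=
  (a, b) ∈ consecPairs l ∨ (b, a) ∈ consecPairs l

/-- `G` contains no induced four-cycle. -/
def NoInduced4Cycle {V : Type} (G : SimpleGraph V) : Prop :=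
  ¬ ∃ a b x y : V, ([a, b, x, y] : List V).Nodup ∧ G.Adj a b ∧ G.Adj b x ∧
      G.Adj x y ∧ G.Adj y a ∧ ¬ G.Adj a x ∧ ¬ G.Adj b y

/-- The subgraph of `G` on the vertex set `S` is a broken wheel with principal path `x q y`:
`S ∖ {q}` carries an induced path from `x` to `y`, every vertex of which is adjacent to the
hub `q`. -/
def IsBrokenWheel {V : Type} [DecidableEq V] (G : SimpleGraph V) (S : Finset V)
    (x q y : V) : Prop :=
  ∃ l : List V, 2 ≤ l.length ∧ l.Nodup ∧ q ∉ l ∧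
    l.head? = some x ∧ l.getLast? = some y ∧
    S = insert q l.toFinset ∧
    (∀ a ∈ l, G.Adj q a) ∧
    (∀ a ∈ l, ∀ b ∈ l, (G.Adj a b ↔ AdjInList l a b))

/-- `Λ^{r1 r2 r3}_{S}(•, b, a)`: the set of colors `d ∈ L r1` such that some `L`-coloring of
the vertex set `S` uses `d, b, a` on the respective vertices `r1, r2, r3`. -/
noncomputable def LambdaSet {V : Type} (G : SimpleGraph V) (L : V → Finset ℕ)
    (S : Finset V) (r1 r2 r3 : V) (b a : ℕ) : Finset ℕ :=
  (L r1).filter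
    (fun d => ∃ φ : V → ℕ, IsColoringOn G L S φ ∧ φ r1 = d ∧ φ r2 = b ∧ φ r3 = a)

/-- `a ∈ L r3` is a universal color for (the subgraph on) `S` with respect to the
2-path `r1 r2 r3`. -/
def IsUniversalColor {V : Type} [DecidableEq V] (G : SimpleGraph V) (L : V → Finset ℕ)
    (S : Finset V) (r1 r2 r3 : V) (a : ℕ) : Prop :=
  ∀ b ∈ L r2, b ≠ a → LambdaSet G L S r1 r2 r3 b a = (L r1).erase b

/-- `a ∈ L r3` is an almost universal color for `S` with respect to the 2-path `r1 r2 r3`. -/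
def IsAlmostUniversalColor {V : Type} (G : SimpleGraph V) (L : V → Finset ℕ)
    (S : Finset V) (r1 r2 r3 : V) (a : ℕ) : Prop :=
  ∀ b ∈ L r2, b ≠ a → (L r1).card - 1 ≤ (LambdaSet G L S r1 r2 r3 b a).card

/-- `v` is joined to `w` by a walk of `G` all of whose vertices avoid the set `F`. -/
def AvoidReach {V : Type} (G : SimpleGraph V) (F : Finset V) (v w : V) : Prop :=
  ∃ p : G.Walk v w, ∀ x ∈ p.support, x ∉ F

/-- The data of a holepunch configuration: a graph `G`; the outer cycle
`p0 q0 z q1 p1 ut ⋯ u1` (listed so that `C ∖ P̊` is the path `p0 u1 ⋯ ut p1`, where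
`us = [u1, …, ut]`); a face system `faces` witnessing a plane embedding; and a
list-assignment `L`. -/
structure Config (V : Type) where
  G : SimpleGraph V
  p0 : V
  q0 : V
  z : V
  q1 : V
  p1 : V
  us : List V
  faces : Finset (List V)
  L : V → Finset ℕ

namespace Config

variable {V : Type} [Fintype V] [DecidableEq V] (c : Config V)

/-- The outer cycle `C`, as a list of vertices in cyclic order. -/
def cyc : List V := [c.p0, c.q0, c.z, c.q1, c.p1] ++ c.us.reverse

/-- The vertex set of the path `P = p0 q0 z q1 p1`. -/
def Pset : Finset V := {c.p0, c.q0, c.z, c.q1, c.p1}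

/-- The vertex set of the outer cycle `C`. -/
def Cset : Finset V := c.Pset ∪ c.us.toFinset

/-- The path `C ∖ P̊ = p0 u1 ⋯ ut p1`. -/
def path0 : List V := c.p0 :: (c.us ++ [c.p1])

/-- The path `C ∖ P̊` traversed starting from `p1`. -/
def path1 : List V := c.path0.reverse

/-- A combinatorial plane embedding of `G` with outer face bounded by `C`: a system of
facial cycles containing `C`, covering every edge exactly twice, and satisfying Euler's
formula. -/
def IsPlane : Prop :=
  c.cyc ∈ c.faces ∧
  (∀ f ∈ c.faces, IsCycleList c.G f) ∧
  (∀ ⦃u v : V⦄, c.G.Adj u v → (c.faces.filter (fun f => EdgeOnCycle f u v)).card = 2) ∧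
  Fintype.card V + c.faces.card = c.G.edgeSet.ncard + 2

/-- Every face of `G` other than the outer face is bounded by a triangle. -/
def InnerTriangulated : Prop :=
  ∀ f ∈ c.faces, f ≠ c.cyc → f.length = 3

/-- The three internal vertices `q0, z, q1` of `P` have no common neighbour in `C ∖ P`. -/
def NoCommonNbr : Prop :=
  ∀ w ∈ c.us, ¬ (c.G.Adj c.q0 w ∧ c.G.Adj c.z w ∧ c.G.Adj c.q1 w)

/-- The list sizes of the general (Holepunch) hypotheses. -/
def BaseLists : Prop :=
  4 ≤ (c.L c.p0).card + (c.L c.p1).card ∧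
  (c.L c.p0).Nonempty ∧ (c.L c.p1).Nonempty ∧
  (∀ v ∈ c.us, 3 ≤ (c.L v).card) ∧
  5 ≤ (c.L c.q0).card ∧ 5 ≤ (c.L c.z).card ∧ 5 ≤ (c.L c.q1).card ∧
  (∀ v : V, v ∉ c.Cset → 5 ≤ (c.L v).card)

/-- The sharpened list sizes of the minimal-counterexample setup. -/
def ExactLists : Prop :=
  (c.L c.p0).card + (c.L c.p1).card = 4 ∧
  (c.L c.p0).Nonempty ∧ (c.L c.p1).Nonempty ∧
  (∀ v ∈ c.us, (c.L v).card = 3) ∧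
  5 ≤ (c.L c.q0).card ∧ (c.L c.z).card = 5 ∧ 5 ≤ (c.L c.q1).card ∧
  (∀ v : V, v ∉ c.Cset → (c.L v).card = 5)

/-- There is a partial `L`-coloring `φ` of `V(C) ∖ {q0, q1}` whose domain contains
`p0, p1, z`, which leaves lists of size at least three on each of `q0, q1`, and such that
every extension of `φ` to an `L`-coloring of `dom(φ) ∪ {q0, q1}` extends to an
`L`-coloring of all of `G`. -/
def HasGood : Prop :=
  ∃ (D : Finset V) (φ : V → ℕ),
    D ⊆ c.Cset \ {c.q0, c.q1} ∧ c.p0 ∈ D ∧ c.p1 ∈ D ∧ c.z ∈ D ∧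
    IsColoringOn c.G c.L D φ ∧
    3 ≤ (reducedList c.G c.L D φ c.q0).card ∧
    3 ≤ (reducedList c.G c.L D φ c.q1).card ∧
    ∀ ψ : V → ℕ, (∀ v ∈ D, ψ v = φ v) →
      IsColoringOn c.G c.L (D ∪ {c.q0, c.q1}) ψ →
      ∃ σ : V → ℕ, (∀ v ∈ D ∪ {c.q0, c.q1}, σ v = ψ v) ∧
        IsColoringOn c.G c.L Finset.univ σ

/-- Minimality: every plane configuration on strictly fewer vertices satisfying the
general (Holepunch) hypotheses admits a good partial coloring. -/
def Minimal (_cnf : Config V) : Prop :=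
  ∀ (n : ℕ) (c' : Config (Fin n)), n < Fintype.card V →
    c'.IsPlane → IsCycleList c'.G c'.cyc → c'.NoCommonNbr → c'.BaseLists →
    c'.HasGood

/-- `v` can reach the outer cycle off `F` by a walk of `G` avoiding `F`. -/
def OutsideConnected (F : Finset V) (v : V) : Prop :=
  ∃ w ∈ c.Cset, w ∉ F ∧ AvoidReach c.G F v w

/-- The vertex set of the closed exterior of a cycle with vertex set `F`. -/
noncomputable def extVerts (F : Finset V) : Finset V :=
  F ∪ Finset.univ.filter (fun v => v ∉ F ∧ c.OutsideConnected F v)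

/-- The vertex set of the closed interior of a cycle with vertex set `F`. -/
noncomputable def intVerts (F : Finset V) : Finset V :=
  F ∪ Finset.univ.filter (fun v => v ∉ F ∧ ¬ c.OutsideConnected F v)

/-- `G` is short-separation-free: for every cycle `F` of `G` with at most four vertices,
either the closed interior or the closed exterior of `F` contains no vertices other than
those of `F`. -/
def ShortSepFree : Prop :=
  ∀ f : List V, IsCycleList c.G f → f.length ≤ 4 →
    c.intVerts f.toFinset = f.toFinset ∨ c.extVerts f.toFinset = f.toFinset

/-- `uv` is a chord of the outer cycle `C`. -/
def IsChordOfC (u v : V) : Prop :=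
  c.G.Adj u v ∧ u ∈ c.Cset ∧ v ∈ c.Cset ∧ ¬ EdgeOnCycle c.cyc u v

/-- Some chord of `C` is incident to `z`. -/
def ZChord : Prop := ∃ w : V, c.IsChordOfC c.z w

/-- `v0`: the neighbour of `q0` on the path `C ∖ P̊` which is farthest from `p0`. -/
noncomputable def v0 : V :=
  ((c.path0.filter (fun w => decide (c.G.Adj c.q0 w))).getLast?).getD c.p0

/-- `v1`: the neighbour of `q1` on the path `C ∖ P̊` which is farthest from `p1`. -/
noncomputable def v1 : V :=
  ((c.path1.filter (fun w => decide (c.G.Adj c.q1 w))).getLast?).getD c.p1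

/-- `x0`: the neighbour of `z` on the path `C ∖ P̊` which is farthest from `p0`. -/
noncomputable def x0 : V :=
  ((c.path0.filter (fun w => decide (c.G.Adj c.z w))).getLast?).getD c.p0

/-- `x1`: the neighbour of `z` on the path `C ∖ P̊` which is farthest from `p1`. -/
noncomputable def x1 : V :=
  ((c.path1.filter (fun w => decide (c.G.Adj c.z w))).getLast?).getD c.p1

/-- The subpath of `C ∖ P̊` from `p0` to `v0`. -/
noncomputable def seg0 : List V := c.path0.take (c.path0.idxOf c.v0 + 1)

/-- The boundary cycle `p0 u1 ⋯ v0 q0` of `K0`. -/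
noncomputable def K0bd : List V := c.seg0 ++ [c.q0]

/-- The vertex set of `K0`, the subgraph of `G` bounded by the outer walk `v0 ⋯ p0 q0`. -/
noncomputable def K0set : Finset V := c.intVerts c.K0bd.toFinset

/-- The subpath of `C ∖ P̊` from `p1` to `v1`. -/
noncomputable def seg1 : List V := c.path1.take (c.path1.idxOf c.v1 + 1)

/-- The boundary cycle `p1 ut ⋯ v1 q1` of `K1`. -/
noncomputable def K1bd : List V := c.seg1 ++ [c.q1]

/-- The vertex set of `K1`, the subgraph of `G` bounded by the outer walk `v1 ⋯ p1 q1`. -/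
noncomputable def K1set : Finset V := c.intVerts c.K1bd.toFinset

/-- The neighbour of `p0` on the path `C ∖ P̊`. -/
def nbr0 : V := c.path0.getD 1 c.p0

/-- The neighbour of `p1` on the path `C ∖ P̊`. -/
def nbr1 : V := c.path1.getD 1 c.p1

/-- The vertex at distance two from `p0` on the path `C ∖ P̊`. -/
def xdist0 : V := c.path0.getD 2 c.p0

/-- The vertex at distance two from `p1` on the path `C ∖ P̊`. -/
def xdist1 : V := c.path1.getD 2 c.p1

/-- `p0` is predictable: `L(p0) ⊆ L(y)` for the neighbour `y` of `p0` on `C ∖ P̊`. -/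
def Predictable0 : Prop := c.L c.p0 ⊆ c.L c.nbr0

/-- `p1` is predictable: `L(p1) ⊆ L(y)` for the neighbour `y` of `p1` on `C ∖ P̊`. -/
def Predictable1 : Prop := c.L c.p1 ⊆ c.L c.nbr1

end Config

/-- The minimal-counterexample setup: a plane configuration with exact list sizes, all
inner faces triangles, no good partial coloring, and minimum number of vertices among all
plane configurations satisfying the general hypotheses. -/
structure Config.MCE {V : Type} [Fintype V] [DecidableEq V] (c : Config V) : Prop where
  plane : c.IsPlane
  cyc_cycle : IsCycleList c.G c.cyc
  noCommon : c.NoCommonNbr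
  lists : c.ExactLists
  tri : c.InnerTriangulated
  bad : ¬ c.HasGood
  minimal : c.Minimal

/-- The explicit six-vertex configuration of Figure 1: the outer cycle is
`p0 q0 z q1 p1 u1` (vertices `0 1 2 3 4 5` of `Fin 6`) with the additional edges
`u1 q0`, `u1 z`, `u1 q1`, and the indicated lists built from seven distinct colors. -/
def counterexampleConfig (ca cb cc cd cf cr cs : ℕ) : Config (Fin 6) where
  G := SimpleGraph.fromRel (fun u v =>
    (u, v) ∈ ([(0, 1), (1, 2), (2, 3), (3, 4), (4, 5), (5, 0), (5, 1), (5, 2), (5, 3)] :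
      List (Fin 6 × Fin 6)))
  p0 := 0
  q0 := 1
  z := 2
  q1 := 3
  p1 := 4
  us := [5]
  faces := ∅
  L := fun v =>
    if v = 0 then {ca}
    else if v = 1 then {ca, cb, cc, cr, cs}
    else if v = 2 then {cb, cc, cd, cr, cs}
    else if v = 3 then {cb, cc, cd, cf, cs}
    else if v = 4 then {cb, cc, cf}
    else {ca, cb, cc}

set_option maxHeartbeats 1000000 in
/-- The no-common-neighbour hypothesis of the Holepunch Theorem cannot be dropped: for the
configuration above (with seven pairwise distinct colors `a b c d f r s`), there is no
partial `L`-coloring `φ` of `V(C) ∖ {q0, q1}` with `p0, p1, z ∈ dom φ` leaving lists of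
size at least three on `q0` and `q1` such that every extension of `φ` to an `L`-coloring
of `dom φ ∪ {q0, q1}` extends to an `L`-coloring of `G`. -/
theorem holepunch_counterexample (ca cb cc cd cf cr cs : ℕ)
    (hdist : ([ca, cb, cc, cd, cf, cr, cs] : List ℕ).Nodup) :
    ¬ (counterexampleConfig ca cb cc cd cf cr cs).HasGood := by
  simp only [List.nodup_cons, List.mem_cons, List.not_mem_nil, or_false, List.mem_singleton,
    List.nodup_nil, and_true, not_or] at hdist
  obtain ⟨⟨hab, hac, had, haf, har, has⟩, ⟨hbc, hbd, hbf, hbr, hbs⟩, ⟨hcd, hcf, hcr, hcs⟩,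
    ⟨hdf, hdr, hds⟩, ⟨hfr, hfs⟩, hrs, -⟩ := hdist
  have hba : cb ≠ ca := fun h => hab h.symm
  have hca' : cc ≠ ca := fun h => hac h.symm
  have hcb' : cc ≠ cb := fun h => hbc h.symm
  have hdb : cd ≠ cb := fun h => hbd h.symm
  have hdc : cd ≠ cc := fun h => hcd h.symm
  have hfb : cf ≠ cb := fun h => hbf h.symm
  have hfc : cf ≠ cc := fun h => hcf h.symm
  have hfd : cf ≠ cd := fun h => hdf h.symm
  set c := counterexampleConfig ca cb cc cd cf cr cs with hcdef
  have adj : ∀ u v : Fin 6, c.G.Adj u v ↔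
      u ≠ v ∧ ((u, v) ∈ ([(0, 1), (1, 2), (2, 3), (3, 4), (4, 5), (5, 0), (5, 1), (5, 2), (5, 3)] :
        List (Fin 6 × Fin 6)) ∨ (v, u) ∈ ([(0, 1), (1, 2), (2, 3), (3, 4), (4, 5), (5, 0), (5, 1),
        (5, 2), (5, 3)] : List (Fin 6 × Fin 6))) := fun u v => SimpleGraph.fromRel_adj _ u v
  rintro ⟨D, φ, hD, h0, h4, h2, ⟨hmem, hprop⟩, hq0, hq1, hext⟩
  have hDsub : D ⊆ ({0, 2, 4, 5} : Finset (Fin 6)) := by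
    intro x hx
    have hx' := hD hx
    rw [show c.Cset \ {c.q0, c.q1} = ({0, 2, 4, 5} : Finset (Fin 6)) from rfl] at hx'
    exact hx'
  have hφ0 : φ 0 = ca := by
    have h := hmem 0 h0
    rw [show c.L 0 = {ca} from rfl] at h
    exact Finset.mem_singleton.mp h
  have hφ2 : φ 2 = cb ∨ φ 2 = cc ∨ φ 2 = cd ∨ φ 2 = cr ∨ φ 2 = cs := by
    have h := hmem 2 h2
    rw [show c.L 2 = {cb, cc, cd, cr, cs} from rfl] at h
    simpa using h
  have hφ4 : φ 4 = cb ∨ φ 4 = cc ∨ φ 4 = cf := by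
    have h := hmem 4 h4
    rw [show c.L 4 = {cb, cc, cf} from rfl] at h
    simpa using h
  by_cases h5 : (5 : Fin 6) ∈ D
  · -- D = {0,2,4,5}; the reduced list on q0 or q1 is too small.
    have hDeq : D = ({0, 2, 4, 5} : Finset (Fin 6)) := by
      refine Finset.Subset.antisymm hDsub ?_
      intro x hx
      simp only [Finset.mem_insert, Finset.mem_singleton] at hx
      rcases hx with rfl | rfl | rfl | rfl <;> assumption
    have hφ5mem : φ 5 ∈ ({ca, cb, cc} : Finset ℕ) := by
      have h := hmem 5 h5
      rw [show c.L 5 = {ca, cb, cc} from rfl] at h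
      exact h
    have h05 : φ 0 ≠ φ 5 := hprop h0 h5 (by rw [adj]; decide)
    have h25 : φ 2 ≠ φ 5 := hprop h2 h5 (by rw [adj]; decide)
    have h45 : φ 4 ≠ φ 5 := hprop h4 h5 (by rw [adj]; decide)
    have hφ5 : φ 5 = cb ∨ φ 5 = cc := by
      simp only [Finset.mem_insert, Finset.mem_singleton] at hφ5mem
      rcases hφ5mem with h | h | h
      · exact absurd (hφ0.trans h.symm) h05
      · exact Or.inl h
      · exact Or.inr h
    have ha5 : ca ≠ φ 5 := by rcases hφ5 with h | h <;> rw [h] <;> assumption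
    by_cases hzd : φ 2 = cd
    · -- use q1 = vertex 3
      have hfil : D.filter (fun w => c.G.Adj 3 w) = ({2, 4, 5} : Finset (Fin 6)) := by
        rw [hDeq]; ext x; rw [Finset.mem_filter, adj]; fin_cases x <;> decide
      have hred : reducedList c.G c.L D φ 3 = {cb, cc, cd, cf, cs} \ {φ 2, φ 4, φ 5} := by
        rw [reducedList, hfil, show c.L 3 = {cb, cc, cd, cf, cs} from rfl]
        simp [Finset.image_insert]
      rw [show c.q1 = (3 : Fin 6) from rfl, hred] at hq1
      have hd4 : cd ≠ φ 4 := by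
        rcases hφ4 with h | h | h <;> rw [h]
        exacts [hdb, hdc, hdf]
      have hd5 : cd ≠ φ 5 := by
        rcases hφ5 with h | h <;> rw [h]
        exacts [hdb, hdc]
      have hsub : ({φ 2, φ 4, φ 5} : Finset ℕ) ⊆ {cb, cc, cd, cf, cs} := by
        intro x hx
        simp only [Finset.mem_insert, Finset.mem_singleton] at hx ⊢
        rcases hx with rfl | rfl | rfl
        · rw [hzd]; simp
        · rcases hφ4 with h | h | h <;> rw [h] <;> simp
        · rcases hφ5 with h | h <;> rw [h] <;> simp
      have hcard3 : ({φ 2, φ 4, φ 5} : Finset ℕ).card = 3 := by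
        rw [Finset.card_insert_of_notMem (by rw [hzd]; simp [hd4, hd5]),
          Finset.card_insert_of_notMem (by simp [h45]), Finset.card_singleton]
      have hcard5 : ({cb, cc, cd, cf, cs} : Finset ℕ).card = 5 := by
        rw [Finset.card_insert_of_notMem (by simp [hbc, hbd, hbf, hbs]),
          Finset.card_insert_of_notMem (by simp [hcd, hcf, hcs]),
          Finset.card_insert_of_notMem (by simp [hdf, hds]),
          Finset.card_insert_of_notMem (by simp [hfs]), Finset.card_singleton]
      rw [Finset.card_sdiff_of_subset hsub, hcard3, hcard5] at hq1
      omega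
    · -- use q0 = vertex 1
      have hfil : D.filter (fun w => c.G.Adj 1 w) = ({0, 2, 5} : Finset (Fin 6)) := by
        rw [hDeq]; ext x; rw [Finset.mem_filter, adj]; fin_cases x <;> decide
      have hred : reducedList c.G c.L D φ 1 = {ca, cb, cc, cr, cs} \ {φ 0, φ 2, φ 5} := by
        rw [reducedList, hfil, show c.L 1 = {ca, cb, cc, cr, cs} from rfl]
        simp [Finset.image_insert]
      rw [show c.q0 = (1 : Fin 6) from rfl, hred] at hq0
      have hφ2' : φ 2 = cb ∨ φ 2 = cc ∨ φ 2 = cr ∨ φ 2 = cs := by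
        rcases hφ2 with h | h | h | h | h
        exacts [Or.inl h, Or.inr (Or.inl h), absurd h hzd, Or.inr (Or.inr (Or.inl h)),
          Or.inr (Or.inr (Or.inr h))]
      have ha2 : ca ≠ φ 2 := by
        rcases hφ2' with h | h | h | h <;> rw [h] <;> assumption
      have hsub : ({φ 0, φ 2, φ 5} : Finset ℕ) ⊆ {ca, cb, cc, cr, cs} := by
        intro x hx
        simp only [Finset.mem_insert, Finset.mem_singleton] at hx ⊢
        rcases hx with rfl | rfl | rfl
        · rw [hφ0]; simp
        · rcases hφ2' with h | h | h | h <;> rw [h] <;> simp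
        · rcases hφ5 with h | h <;> rw [h] <;> simp
      have hcard3 : ({φ 0, φ 2, φ 5} : Finset ℕ).card = 3 := by
        rw [Finset.card_insert_of_notMem
            (by rw [hφ0]; simp [ha2, ha5]),
          Finset.card_insert_of_notMem (by simp [h25]), Finset.card_singleton]
      have hcard5 : ({ca, cb, cc, cr, cs} : Finset ℕ).card = 5 := by
        rw [Finset.card_insert_of_notMem (by simp [hab, hac, har, has]),
          Finset.card_insert_of_notMem (by simp [hbc, hbr, hbs]),
          Finset.card_insert_of_notMem (by simp [hcr, hcs]),
          Finset.card_insert_of_notMem (by simp [hrs]), Finset.card_singleton]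
      rw [Finset.card_sdiff_of_subset hsub, hcard3, hcard5] at hq0
      omega
  · -- D = {0,2,4}; build a bad extension ψ.
    have hDeq : D = ({0, 2, 4} : Finset (Fin 6)) := by
      refine Finset.Subset.antisymm ?_ ?_
      · intro x hx
        have hx' := hDsub hx
        have hx5 : x ≠ 5 := fun h => h5 (h ▸ hx)
        simp only [Finset.mem_insert, Finset.mem_singleton] at hx' ⊢
        tauto
      · intro x hx
        simp only [Finset.mem_insert, Finset.mem_singleton] at hx
        rcases hx with rfl | rfl | rfl <;> assumption
    subst hDeq
    have hS : ({0, 2, 4} : Finset (Fin 6)) ∪ {c.q0, c.q1} = {0, 1, 2, 3, 4} := by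
      rw [show c.q0 = (1 : Fin 6) from rfl, show c.q1 = (3 : Fin 6) from rfl]; decide
    have key : ∀ x1 x3 : ℕ, x1 ∈ ({ca, cb, cc, cr, cs} : Finset ℕ) →
        x3 ∈ ({cb, cc, cd, cf, cs} : Finset ℕ) → x1 ≠ φ 0 → x1 ≠ φ 2 → x3 ≠ φ 2 → x3 ≠ φ 4 →
        (cb = x1 ∨ cb = φ 2 ∨ cb = x3 ∨ cb = φ 4) →
        (cc = x1 ∨ cc = φ 2 ∨ cc = x3 ∨ cc = φ 4) → False := by
      intro x1 x3 hx1 hx3 hx10 hx12 hx32 hx34 hcb hcc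
      set ψ : Fin 6 → ℕ := fun v => if v = 1 then x1 else if v = 3 then x3 else φ v with hψ
      have hagree : ∀ v ∈ ({0, 2, 4} : Finset (Fin 6)), ψ v = φ v := by
        intro v hv; fin_cases hv <;> rfl
      have hcol : IsColoringOn c.G c.L (({0, 2, 4} : Finset (Fin 6)) ∪ {c.q0, c.q1}) ψ := by
        rw [hS]
        constructor
        · intro v hv; fin_cases hv
          · exact hmem 0 h0
          · exact hx1
          · exact hmem 2 h2
          · exact hx3
          · exact hmem 4 h4
        · intro u v hu hv huv
          fin_cases hu <;> fin_cases hv <;>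
            first
              | exact absurd huv (by rw [adj]; decide)
              | exact hx10.symm | exact hx10 | exact hx12.symm | exact hx12
              | exact hx32.symm | exact hx32 | exact hx34.symm | exact hx34
      obtain ⟨σ, hσeq, hσmem, hσprop⟩ := hext ψ hagree hcol
      have e0 : σ 0 = φ 0 := hσeq 0 (by rw [hS]; decide)
      have e1 : σ 1 = x1 := hσeq 1 (by rw [hS]; decide)
      have e2 : σ 2 = φ 2 := hσeq 2 (by rw [hS]; decide)
      have e3 : σ 3 = x3 := hσeq 3 (by rw [hS]; decide)
      have e4 : σ 4 = φ 4 := hσeq 4 (by rw [hS]; decide)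
      have hσ5 : σ 5 ∈ ({ca, cb, cc} : Finset ℕ) := hσmem 5 (Finset.mem_univ 5)
      have n0 : σ 5 ≠ σ 0 := hσprop (Finset.mem_univ 5) (Finset.mem_univ 0) (by rw [adj]; decide)
      have n1 : σ 5 ≠ σ 1 := hσprop (Finset.mem_univ 5) (Finset.mem_univ 1) (by rw [adj]; decide)
      have n2 : σ 5 ≠ σ 2 := hσprop (Finset.mem_univ 5) (Finset.mem_univ 2) (by rw [adj]; decide)
      have n3 : σ 5 ≠ σ 3 := hσprop (Finset.mem_univ 5) (Finset.mem_univ 3) (by rw [adj]; decide)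
      have n4 : σ 5 ≠ σ 4 := hσprop (Finset.mem_univ 5) (Finset.mem_univ 4) (by rw [adj]; decide)
      rw [e0, hφ0] at n0; rw [e1] at n1; rw [e2] at n2; rw [e3] at n3; rw [e4] at n4
      simp only [Finset.mem_insert, Finset.mem_singleton] at hσ5
      rcases hσ5 with h | h | h
      · exact n0 h
      · rcases hcb with hh | hh | hh | hh
        · exact n1 (h.trans hh)
        · exact n2 (h.trans hh)
        · exact n3 (h.trans hh)
        · exact n4 (h.trans hh)
      · rcases hcc with hh | hh | hh | hh
        · exact n1 (h.trans hh)
        · exact n2 (h.trans hh)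
        · exact n3 (h.trans hh)
        · exact n4 (h.trans hh)
    have key2 : cb ≠ φ 2 → cc ≠ φ 2 → cf ≠ φ 2 → False := by
      intro hb2 hc2 hf2
      rcases hφ4 with hw | hw | hw
      · exact key cc cf (by simp) (by simp) (by rw [hφ0]; exact hca') hc2 hf2
          (by rw [hw]; exact hfb) (Or.inr (Or.inr (Or.inr hw.symm))) (Or.inl rfl)
      · exact key cb cf (by simp) (by simp) (by rw [hφ0]; exact hba) hb2 hf2
          (by rw [hw]; exact hfc) (Or.inl rfl) (Or.inr (Or.inr (Or.inr hw.symm)))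
      · exact key cb cc (by simp) (by simp) (by rw [hφ0]; exact hba) hb2 hc2
          (by rw [hw]; exact hcf) (Or.inl rfl) (Or.inr (Or.inr (Or.inl rfl)))
    rcases hφ2 with hz | hz | hz | hz | hz
    · -- φ 2 = cb : take x1 = cc, x3 = cd
      refine key cc cd (by simp) (by simp) (by rw [hφ0]; exact hca')
        (by rw [hz]; exact hcb') (by rw [hz]; exact hdb)
        (by rcases hφ4 with h | h | h <;> rw [h]
            exacts [hdb, hdc, hdf])
        (Or.inr (Or.inl hz.symm)) (Or.inl rfl)
    · -- φ 2 = cc : take x1 = cb, x3 = cd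
      refine key cb cd (by simp) (by simp) (by rw [hφ0]; exact hba)
        (by rw [hz]; exact hbc) (by rw [hz]; exact hdc)
        (by rcases hφ4 with h | h | h <;> rw [h]
            exacts [hdb, hdc, hdf])
        (Or.inl rfl) (Or.inr (Or.inl hz.symm))
    · exact key2 (by rw [hz]; exact hbd) (by rw [hz]; exact hcd) (by rw [hz]; exact hfd)
    · exact key2 (by rw [hz]; exact hbr) (by rw [hz]; exact hcr) (by rw [hz]; exact hfr)
    · exact key2 (by rw [hz]; exact hbs) (by rw [hz]; exact hcs) (by rw [hz]; exact hfs)
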